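/- arXiv:1808.09645 — 3 statements merged into one kernel-verified Lean document; each statement's English description precedes it below -/
import Mathlib

section
/- Let v, Y ∈ ℝ^d with ‖v‖ = 1, ‖Y‖² ≤ B, and 0 < β ≤ 1/(3B). Define v⁺ = (v + β(vᵀY)Y)/‖v + β(vᵀY)Y‖. Then for each coordinate k, there exists Q_k with |Q_k| ≤ C B² β² (for an absolute constant C) such that v⁺_k - v_k = β((vᵀY)·Y_k - v_k·(vᵀY)²) + Q_k. -/
lemma oja_coord_sq_le (d : ℕ) (x : EuclideanSpace ℝ (Fin d)) (k : Fin d) :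
    x k ^ 2 ≤ ‖x‖ ^ 2 := by
  rw [EuclideanSpace.norm_eq, Real.sq_sqrt (by positivity)]
  calc x k ^ 2 = ‖x k‖ ^ 2 := by rw [Real.norm_eq_abs, sq_abs]
    _ ≤ ∑ i, ‖x i‖ ^ 2 := Finset.single_le_sum (f := fun i => ‖x i‖ ^ 2) (fun i _ => by positivity) (Finset.mem_univ k)

set_option maxHeartbeats 1000000 in
lemma oja_aux2 (vk p t u n a : ℝ) (ha : 0 < a) (ha3 : a ≤ 1/3)
    (hvk : |vk| ≤ 1) (hp : |p| ≤ a) (ht0 : 0 ≤ t) (hu0 : 0 ≤ u)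
    (hta : t ≤ a) (hua : u ≤ a^2) (hut : u ≤ t/3)
    (hn2 : n^2 = 1 + 2*t + u) (hn1 : 1 ≤ n) :
    |n⁻¹*vk + n⁻¹*p - vk - p + t*vk| ≤ 10 * a^2 := by
  have hn0 : (0:ℝ) < n := lt_of_lt_of_le one_pos hn1
  have hm : n⁻¹ * n = 1 := inv_mul_cancel₀ (ne_of_gt hn0)
  have hm2 : n⁻¹ * n^2 = n := by linear_combination n * hm
  set m := n⁻¹ with hmdef
  have hid : (m - 1 + t) * (n * (n+1)) = t*n - t + 2*t^2 + t*u - u := by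
    linear_combination hm2 + hm + (t-1)*hn2
  have hmn1 : n - 1 ≤ t + u/2 := by nlinarith
  have hmle : m ≤ 1 := by rw [hmdef]; exact inv_le_one_of_one_le₀ hn1
  have hm0 : 0 < m := by rw [hmdef]; positivity
  have hm1 : |m - 1| ≤ 2 * a := by
    have h2 : 1 - m ≤ n - 1 := by nlinarith
    rw [abs_le]; constructor <;> nlinarith
  have hnum : |t*n - t + 2*t^2 + t*u - u| ≤ 9/2 * a^2 := by
    rw [abs_le]
    constructor <;> nlinarith [mul_le_mul_of_nonneg_left hmn1 ht0,
      mul_le_mul hta hta ht0 ha.le]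
  have hnn : 2 ≤ n * (n+1) := by nlinarith
  have hA : |m - 1 + t| ≤ 3 * a^2 := by
    have habs : |m - 1 + t| * (n * (n+1)) ≤ 9/2 * a^2 := by
      rw [← abs_of_pos (show (0:ℝ) < n*(n+1) by nlinarith), ← abs_mul, hid]
      exact hnum
    have h2 := mul_le_mul_of_nonneg_left hnn (abs_nonneg (m - 1 + t))
    linarith [sq_nonneg a]
  have hE : m*vk + m*p - vk - p + t*vk = (m - 1 + t)*vk + (m-1)*p := by ring
  rw [hE]
  calc |(m - 1 + t)*vk + (m-1)*p| ≤ |(m - 1 + t)*vk| + |(m-1)*p| := abs_add_le _ _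
    _ = |m - 1 + t| * |vk| + |m-1| * |p| := by rw [abs_mul, abs_mul]
    _ ≤ (3*a^2)*1 + (2*a)*a := by gcongr
    _ ≤ 10 * a^2 := by nlinarith

set_option maxHeartbeats 1000000 in
/-- Per-coordinate increment decomposition of one step of Oja's iteration. -/
theorem oja_increment_decomposition :
    ∃ C : ℝ, 0 < C ∧
      ∀ (d : ℕ) (v Y : EuclideanSpace ℝ (Fin d)) (B β : ℝ),
        ‖v‖ = 1 → ‖Y‖ ^ 2 ≤ B → 0 < β → β ≤ 1 / (3 * B) →
        ∀ k : Fin d, ∃ Q : ℝ, |Q| ≤ C * B ^ 2 * β ^ 2 ∧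
          (‖v + (β * (inner ℝ v Y : ℝ)) • Y‖⁻¹ • (v + (β * (inner ℝ v Y : ℝ)) • Y)) k - v k
            = β * ((inner ℝ v Y : ℝ) * Y k - v k * (inner ℝ v Y : ℝ) ^ 2) + Q := by
  refine ⟨10, by norm_num, ?_⟩
  intro d v Y B β hv hY hβ hβB k
  set s : ℝ := (inner ℝ v Y : ℝ) with hsdef
  have hB : 0 < B := by
    rcases lt_or_ge 0 B with h | h
    · exact h
    · exfalso
      have : 1 / (3*B) ≤ 0 := one_div_nonpos.mpr (by linarith)
      linarith
  have h3B : β * (3*B) ≤ 1 := by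
    have := (le_div_iff₀ (by positivity : (0:ℝ) < 3*B)).mp hβB
    linarith
  have hyn0 : (0:ℝ) ≤ ‖Y‖^2 := by positivity
  have hs2 : s^2 ≤ ‖Y‖^2 := by
    have h1 := abs_real_inner_le_norm v Y
    rw [hv, one_mul] at h1
    nlinarith [abs_nonneg s, sq_abs s, norm_nonneg Y]
  have hsB : s^2 ≤ B := le_trans hs2 hY
  set w : EuclideanSpace ℝ (Fin d) := v + (β * s) • Y with hwdef
  set n : ℝ := ‖w‖ with hndef
  have hsm : ‖(β*s) • Y‖^2 = β^2*s^2*‖Y‖^2 := by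
    rw [norm_smul, mul_pow, Real.norm_eq_abs, sq_abs]; ring
  have hn2 : n^2 = 1 + 2*(β*s^2) + β^2*s^2*‖Y‖^2 := by
    rw [hndef, hwdef, norm_add_sq_real, hv, real_inner_smul_right, hsm, ← hsdef]
    ring
  have hn1 : 1 ≤ n := by
    nlinarith [norm_nonneg w, sq_nonneg s, mul_pos hβ hβ, sq_nonneg (β*s)]
  have hcoord : (n⁻¹ • w) k = n⁻¹ * (v k + (β*s) * Y k) := by
    simp [hwdef, PiLp.smul_apply, PiLp.add_apply, smul_eq_mul]
    ring
  have hvk : |v k| ≤ 1 := by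
    have := oja_coord_sq_le d v k
    rw [hv] at this
    rw [abs_le]; constructor <;> nlinarith
  have hYk : (Y k)^2 ≤ B := le_trans (oja_coord_sq_le d Y k) hY
  have hp : |β*(s*Y k)| ≤ β*B := by
    have h1 : |s*Y k| ≤ B := by
      rw [abs_le]
      constructor <;> nlinarith [sq_nonneg (s - Y k), sq_nonneg (s + Y k)]
    rw [abs_mul, abs_of_pos hβ]
    exact mul_le_mul_of_nonneg_left h1 hβ.le
  have hbound := oja_aux2 (v k) (β*(s*Y k)) (β*s^2) (β^2*s^2*‖Y‖^2) n (β*B)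
    (by positivity) (by linarith) hvk hp (by positivity) (by positivity)
    (by nlinarith) (by nlinarith [mul_le_mul hsB hY hyn0 hB.le, sq_nonneg β])
    (by
      have h1 : β*‖Y‖^2 ≤ 1/3 := by nlinarith
      nlinarith [mul_le_mul_of_nonneg_left h1 (show (0:ℝ) ≤ β*s^2 by positivity)])
    hn2 hn1
  refine ⟨(n⁻¹ • w) k - v k - β * (s * Y k - v k * s^2), ?_, by ring⟩
  rw [hcoord]
  calc |n⁻¹ * (v k + (β*s) * Y k) - v k - β * (s * Y k - v k * s^2)|
      = |n⁻¹*(v k) + n⁻¹*(β*(s*Y k)) - v k - (β*(s*Y k)) + (β*s^2)*(v k)| := by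
        ring_nf
    _ ≤ 10 * (β*B)^2 := hbound
    _ = 10 * B^2 * β^2 := by ring
end

section
/- Suppose λ₂ = λ₃ = … = λ_d and ‖V⁰‖ = 1. Then the first coordinate of the ODE solution satisfies V₁(t)² = (V₁⁰)² e^{2λ₁t} / ((V₁⁰)² e^{2λ₁t} + (1 - (V₁⁰)²) e^{2λ₂t}), which is the logistic curve: it satisfies d/dt (V₁²) = 2(λ₁ - λ₂) V₁² (1 - V₁²). -/
/-- In the degenerate-spectrum case, the first coordinate squared of the Oja
ODE solution is the logistic curve. -/
theorem oja_ode_logistic_case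
    (d : ℕ) (L : Fin (d + 2) → ℝ)
    (hdeg : ∀ i j : Fin (d + 2), i ≠ 0 → j ≠ 0 → L i = L j)
    (V0 : Fin (d + 2) → ℝ) (hunit : ∑ i, (V0 i) ^ 2 = 1)
    (V : Fin (d + 2) → ℝ → ℝ)
    (hV : ∀ k t, V k t =
      (Real.sqrt (∑ i, (V0 i) ^ 2 * Real.exp (2 * L i * t)))⁻¹ *
        (V0 k * Real.exp (L k * t))) :
    ∀ t : ℝ,
      (V 0 t) ^ 2 =
        (V0 0) ^ 2 * Real.exp (2 * L 0 * t) /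
          ((V0 0) ^ 2 * Real.exp (2 * L 0 * t)
            + (1 - (V0 0) ^ 2) * Real.exp (2 * L 1 * t)) ∧
      HasDerivAt (fun s => (V 0 s) ^ 2)
        (2 * (L 0 - L 1) * (V 0 t) ^ 2 * (1 - (V 0 t) ^ 2)) t := by
  set A := (V0 0) ^ 2 with hA
  set B := 1 - A with hB
  have hA0 : 0 ≤ A := sq_nonneg _
  have hAle : A ≤ 1 := by
    rw [← hunit]
    exact Finset.single_le_sum (fun i _ => sq_nonneg (V0 i)) (Finset.mem_univ 0)
  have hB0 : 0 ≤ B := by simp [hB]; linarith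
  -- the tail sum
  have htail : ∑ i : Fin (d + 1), (V0 i.succ) ^ 2 = B := by
    have := hunit
    rw [Fin.sum_univ_succ] at this
    simp [hB]; linarith
  have hZ : ∀ t : ℝ, (∑ i, (V0 i) ^ 2 * Real.exp (2 * L i * t))
      = A * Real.exp (2 * L 0 * t) + B * Real.exp (2 * L 1 * t) := by
    intro t
    rw [Fin.sum_univ_succ]
    congr 1
    have : ∀ i : Fin (d + 1), L i.succ = L 1 := fun i =>
      hdeg i.succ 1 (Fin.succ_ne_zero i) (by simp [Fin.ext_iff])
    rw [← htail, Finset.sum_mul]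
    exact Finset.sum_congr rfl (fun i _ => by rw [this i])
  have hZpos : ∀ t : ℝ, 0 < A * Real.exp (2 * L 0 * t) + B * Real.exp (2 * L 1 * t) := by
    intro t
    rcases eq_or_lt_of_le hA0 with h | h
    · have : B = 1 := by simp [hB, ← h]
      rw [this]; nlinarith [Real.exp_pos (2 * L 0 * t), Real.exp_pos (2 * L 1 * t)]
    · nlinarith [Real.exp_pos (2 * L 0 * t), Real.exp_pos (2 * L 1 * t)]
  have hmain : ∀ t : ℝ, (V 0 t) ^ 2 = A * Real.exp (2 * L 0 * t) /
      (A * Real.exp (2 * L 0 * t) + B * Real.exp (2 * L 1 * t)) := by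
    intro t
    rw [hV 0 t, hZ t]
    rw [mul_pow, inv_pow, mul_pow, Real.sq_sqrt (le_of_lt (hZpos t))]
    rw [← Real.exp_nat_mul]
    push_cast
    rw [div_eq_inv_mul]
    ring_nf
    rw [hA]; ring
  intro t
  refine ⟨hmain t, ?_⟩
  set a := 2 * L 0 with ha
  set b := 2 * L 1 with hb
  have hu : HasDerivAt (fun s => A * Real.exp (a * s)) (A * (Real.exp (a * t) * a)) t :=
    by simpa using (((hasDerivAt_id t).const_mul a).exp).const_mul A
  have hv : HasDerivAt (fun s => B * Real.exp (b * s)) (B * (Real.exp (b * t) * b)) t :=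
    by simpa using (((hasDerivAt_id t).const_mul b).exp).const_mul B
  have hw := hu.add hv
  have hdiv := hu.div hw (ne_of_gt (hZpos t))
  have heq : (fun s => (V 0 s) ^ 2) = fun s => A * Real.exp (a * s) /
      (A * Real.exp (a * s) + B * Real.exp (b * s)) := funext fun s => hmain s
  rw [heq]
  refine hdiv.congr_deriv ?_
  rw [hmain t]
  have hne := ne_of_gt (hZpos t)
  simp only [Pi.add_apply, ha, hb] at hne ⊢
  generalize Real.exp (2 * L 0 * t) = x at hne ⊢
  generalize Real.exp (2 * L 1 * t) = y at hne ⊢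
  field_simp
  ring
end

section
/- Let λ₁ > λ₂ ≥ … ≥ λ_d > 0, let V⁰ be a unit vector with (V₁⁰)² = δ ∈ (0, 1/2), and let V(t) be the generalized logistic curve V_k(t) = Z(t)^(-1/2) V_k⁰ e^{λ_k t}. If T satisfies V₁(T)² = 1 - δ, then (λ₁-λ_d)^(-1) log((1-δ)/δ) ≤ T ≤ (λ₁-λ₂)^(-1) log((1-δ)/δ). -/
set_option maxHeartbeats 1000000 in
/-- Bounds on the Phase II crossing time of the generalized logistic curve. -/
theorem oja_phase2_crossing_time
    (d : ℕ) (L : Fin (d + 2) → ℝ)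
    (hanti : Antitone L) (hgap : L 1 < L 0) (hpos : 0 < L (Fin.last (d + 1)))
    (V0 : Fin (d + 2) → ℝ) (hunit : ∑ i, (V0 i) ^ 2 = 1)
    (δ : ℝ) (hδ0 : 0 < δ) (hδ1 : δ < 1 / 2) (hinit : (V0 0) ^ 2 = δ)
    (V : Fin (d + 2) → ℝ → ℝ)
    (hV : ∀ k t, V k t =
      (Real.sqrt (∑ i, (V0 i) ^ 2 * Real.exp (2 * L i * t)))⁻¹ *
        (V0 k * Real.exp (L k * t)))
    (T : ℝ) (hT : (V 0 T) ^ 2 = 1 - δ) :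
    (L 0 - L (Fin.last (d + 1)))⁻¹ * Real.log ((1 - δ) / δ) ≤ T ∧
      T ≤ (L 0 - L 1)⁻¹ * Real.log ((1 - δ) / δ) := by
  have hδ1' : 0 < 1 - δ := by linarith
  have hδlt : δ < 1 - δ := by linarith
  set Z : ℝ := ∑ i, (V0 i) ^ 2 * Real.exp (2 * L i * T) with hZdef
  have hZpos : 0 < Z := by
    apply Finset.sum_pos' (fun i _ => by positivity)
    exact ⟨0, Finset.mem_univ 0, by rw [hinit]; positivity⟩
  have key : δ * Real.exp (2 * L 0 * T) = (1 - δ) * Z := by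
    have h := hT
    rw [hV] at h
    have hsq : Real.sqrt Z ^ 2 = Z := Real.sq_sqrt hZpos.le
    have e1 : Real.exp (L 0 * T) ^ 2 = Real.exp (2 * L 0 * T) := by
      rw [sq, ← Real.exp_add]; ring_nf
    have hexp : ((Real.sqrt Z)⁻¹ * (V0 0 * Real.exp (L 0 * T))) ^ 2
        = Z⁻¹ * (δ * Real.exp (2 * L 0 * T)) := by
      calc ((Real.sqrt Z)⁻¹ * (V0 0 * Real.exp (L 0 * T))) ^ 2
          = (Real.sqrt Z ^ 2)⁻¹ * ((V0 0) ^ 2 * Real.exp (L 0 * T) ^ 2) := by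
            rw [mul_pow, mul_pow, inv_pow]
        _ = Z⁻¹ * (δ * Real.exp (2 * L 0 * T)) := by rw [hsq, hinit, e1]
    rw [hexp] at h
    field_simp at h
    linarith
  set S : ℝ := ∑ i : Fin (d + 1), (V0 i.succ) ^ 2 * Real.exp (2 * L i.succ * T) with hSdef
  have hsplit : Z = δ * Real.exp (2 * L 0 * T) + S := by
    rw [hZdef, Fin.sum_univ_succ, hinit]
  have hmass : ∑ i : Fin (d + 1), (V0 i.succ) ^ 2 = 1 - δ := by
    have := hunit
    rw [Fin.sum_univ_succ, hinit] at this
    linarith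
  have key2 : δ ^ 2 * Real.exp (2 * L 0 * T) = (1 - δ) * S := by
    linear_combination key + (1 - δ) * hsplit
  -- T is nonnegative
  have hT0 : 0 ≤ T := by
    by_contra hneg
    push_neg at hneg
    have hSlb : (1 - δ) * Real.exp (2 * L 0 * T) ≤ S := by
      rw [← hmass, Finset.sum_mul]
      apply Finset.sum_le_sum
      intro i _
      have hle : L i.succ ≤ L 0 := hanti (Fin.zero_le _)
      have : Real.exp (2 * L 0 * T) ≤ Real.exp (2 * L i.succ * T) :=
        Real.exp_le_exp.2 (by nlinarith)
      nlinarith [sq_nonneg (V0 i.succ)]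
    have he : 0 < Real.exp (2 * L 0 * T) := Real.exp_pos _
    nlinarith
  have hL1 : ∀ i : Fin (d + 1), L i.succ ≤ L 1 := by
    intro i
    apply hanti
    rw [Fin.le_def]
    simp [Fin.val_one]
  have hLlast : ∀ i : Fin (d + 1), L (Fin.last (d + 1)) ≤ L i.succ :=
    fun i => hanti (Fin.le_last _)
  have hgap' : 0 < L 0 - L 1 := by linarith
  have hgap'' : 0 < L 0 - L (Fin.last (d + 1)) := by
    have := hanti (show (1 : Fin (d + 2)) ≤ Fin.last (d + 1) from Fin.le_last _)
    linarith
  have hlogpos : 0 ≤ Real.log ((1 - δ) / δ) := by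
    apply Real.log_nonneg
    rw [le_div_iff₀ hδ0]
    linarith
  constructor
  ·
    have hSlb : (1 - δ) * Real.exp (2 * L (Fin.last (d + 1)) * T) ≤ S := by
      rw [← hmass, Finset.sum_mul]
      apply Finset.sum_le_sum
      intro i _
      have : Real.exp (2 * L (Fin.last (d + 1)) * T) ≤ Real.exp (2 * L i.succ * T) :=
        Real.exp_le_exp.2 (by nlinarith [hLlast i, hT0])
      exact mul_le_mul_of_nonneg_left this (sq_nonneg _)
    have hineq : (1 - δ) ^ 2 * Real.exp (2 * L (Fin.last (d + 1)) * T)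
        ≤ δ ^ 2 * Real.exp (2 * L 0 * T) := by
      rw [key2]; nlinarith
    have hlog := Real.log_le_log (by positivity) hineq
    rw [Real.log_mul (by positivity) (Real.exp_ne_zero _),
        Real.log_mul (by positivity) (Real.exp_ne_zero _),
        Real.log_exp, Real.log_exp, Real.log_pow, Real.log_pow] at hlog
    push_cast at hlog
    rw [inv_mul_eq_div, div_le_iff₀ hgap'',
        Real.log_div (by linarith) (by linarith)]
    linarith
  · have hSub : S ≤ (1 - δ) * Real.exp (2 * L 1 * T) := by
      rw [← hmass, Finset.sum_mul]
      apply Finset.sum_le_sum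
      intro i _
      have : Real.exp (2 * L i.succ * T) ≤ Real.exp (2 * L 1 * T) :=
        Real.exp_le_exp.2 (by nlinarith [hL1 i, hT0])
      exact mul_le_mul_of_nonneg_left this (sq_nonneg _)
    have hineq : δ ^ 2 * Real.exp (2 * L 0 * T)
        ≤ (1 - δ) ^ 2 * Real.exp (2 * L 1 * T) := by
      rw [key2]; nlinarith
    have hlog := Real.log_le_log (by positivity) hineq
    rw [Real.log_mul (by positivity) (Real.exp_ne_zero _),
        Real.log_mul (by positivity) (Real.exp_ne_zero _),
        Real.log_exp, Real.log_exp, Real.log_pow, Real.log_pow] at hlog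
    push_cast at hlog
    rw [inv_mul_eq_div, le_div_iff₀ hgap',
        Real.log_div (by linarith) (by linarith)]
    linarith
end
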